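/- Let n ≥ 3 with n ≠ 5 and let C = x_0, x_1, …, x_{n−1}, x_0 be a cycle of length n. Let f be a partial edge coloring of exactly three edges of C, using colors from a fixed set of three colors, such that f is proper (any two adjacent colored edges receive different colors) and at least two of the three colored edges are adjacent. Then f can be extended to a 3-star edge coloring of C using the same three colors. -/

import Mathlib

/-- A 3-star edge coloring of the cycle `x_0, x_1, …, x_{n-1}, x_0`, where the edge
`x_i x_{i+1}` (indices mod `n`) receives color `g i`: the coloring is proper
(adjacent edges get distinct colors) and no path or cycle with four edges is bicolored
(for a proper coloring this means no four consecutive edges are colored `a b a b`). -/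
def IsStarEdgeColoringCycle {α : Type*} (n : ℕ) (g : ZMod n → α) : Prop :=
  (∀ i, g i ≠ g (i + 1)) ∧ ∀ i, ¬ (g i = g (i + 2) ∧ g (i + 1) = g (i + 3))

private def cntF (o L j : ℕ) : ℕ := min j (o + L) - min j o

private def uF (n o L k : ℕ) : ZMod 3 := ((k % n) + cntF o L (k % n) : ℕ)

private def stF (n o L k : ℕ) : ZMod 3 := if o ≤ k % n ∧ k % n < o + L then 2 else 1

private lemma zmod3_helper (x y : ℕ) (h : x % 3 = y % 3) : (x : ZMod 3) = (y : ℕ) :=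
  (ZMod.natCast_eq_natCast_iff _ _ _).mpr h

private lemma mod_add_small (n k j : ℕ) (h : j < n) : (k + j) % n = (k % n + j) % n := by
  conv_lhs => rw [Nat.add_mod]
  rw [Nat.mod_eq_of_lt h]

private lemma uF_congr (n o L x y : ℕ) (h : x % n = y % n) : uF n o L x = uF n o L y := by
  unfold uF; rw [h]

private lemma vstep (n o L : ℕ) (h3 : 3 ≤ n) (ho : 1 ≤ o) (hoL : o + L ≤ n)
    (hL : L = 0 ∧ o = 1 ∨ 2 ≤ L ∧ L + 2 ≤ n) (hsum : (n + L) % 3 = 0) (k : ℕ) :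
    uF n o L (k + 1) = uF n o L k + stF n o L k := by
  have hr : k % n < n := Nat.mod_lt _ (by omega)
  have e1 : (k + 1) % n = (k % n + 1) % n := mod_add_small n k 1 (by omega)
  by_cases hw : k % n + 1 = n
  · have e0 : (k + 1) % n = 0 := by rw [e1, hw, Nat.mod_self]
    unfold uF stF cntF
    rw [e0]
    split_ifs with hc
    · rw [show (2 : ZMod 3) = ((2 : ℕ) : ZMod 3) by norm_num, ← Nat.cast_add]
      exact zmod3_helper _ _ (by omega)
    · rw [show (1 : ZMod 3) = ((1 : ℕ) : ZMod 3) by norm_num, ← Nat.cast_add]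
      exact zmod3_helper _ _ (by omega)
  · have e0 : (k + 1) % n = k % n + 1 := by rw [e1, Nat.mod_eq_of_lt (by omega)]
    unfold uF stF cntF
    rw [e0]
    split_ifs with hc
    · rw [show (2 : ZMod 3) = ((2 : ℕ) : ZMod 3) by norm_num, ← Nat.cast_add]
      exact zmod3_helper _ _ (by omega)
    · rw [show (1 : ZMod 3) = ((1 : ℕ) : ZMod 3) by norm_num, ← Nat.cast_add]
      exact zmod3_helper _ _ (by omega)

private lemma noalt (n o L : ℕ) (h3 : 3 ≤ n) (ho : 1 ≤ o) (hoL : o + L ≤ n)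
    (hL : L = 0 ∧ o = 1 ∨ 2 ≤ L ∧ L + 2 ≤ n) (k : ℕ) :
    stF n o L k = stF n o L (k + 1) ∨ stF n o L (k + 1) = stF n o L (k + 2) := by
  have hr : k % n < n := Nat.mod_lt _ (by omega)
  have e1 : (k + 1) % n = (k % n + 1) % n := mod_add_small n k 1 (by omega)
  have e2 : (k + 2) % n = (k % n + 2) % n := mod_add_small n k 2 (by omega)
  unfold stF
  by_cases hw1 : k % n + 1 = n
  · have f1 : (k + 1) % n = 0 := by rw [e1, hw1, Nat.mod_self]
    have f2 : (k + 2) % n = 1 := by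
      rw [e2, show k % n + 2 = n + 1 by omega, Nat.add_mod_left, Nat.mod_eq_of_lt (by omega)]
    rw [f1, f2]
    split_ifs <;> first | (left; rfl) | (right; rfl) | (exfalso; omega)
  · by_cases hw2 : k % n + 2 = n
    · have f1 : (k + 1) % n = k % n + 1 := by rw [e1, Nat.mod_eq_of_lt (by omega)]
      have f2 : (k + 2) % n = 0 := by rw [e2, hw2, Nat.mod_self]
      rw [f1, f2]
      split_ifs <;> first | (left; rfl) | (right; rfl) | (exfalso; omega)
    · have f1 : (k + 1) % n = k % n + 1 := by rw [e1, Nat.mod_eq_of_lt (by omega)]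
      have f2 : (k + 2) % n = k % n + 2 := by rw [e2, Nat.mod_eq_of_lt (by omega)]
      rw [f1, f2]
      split_ifs <;> first | (left; rfl) | (right; rfl) | (exfalso; omega)

private lemma stF_ne_zero (n o L k : ℕ) : stF n o L k ≠ 0 := by
  unfold stF; split_ifs <;> decide

private lemma stF_sum_ne (n o L k k' : ℕ) (h : stF n o L k = stF n o L k') :
    stF n o L k + stF n o L k' ≠ 0 := by
  rw [← h]; unfold stF; split_ifs <;> decide

private lemma exists_oL (n m tv : ℕ) (hn : 3 ≤ n) (hn5 : n ≠ 5) (hm2 : 2 ≤ m) (hmn : m < n)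
    (htv : tv < 3) (h2 : m ≠ 2 ∨ tv ≠ 1) (h3 : m ≠ n - 1 ∨ tv ≠ 0) :
    ∃ o L, 1 ≤ o ∧ o + L ≤ n ∧ (L = 0 ∧ o = 1 ∨ 2 ≤ L ∧ L + 2 ≤ n) ∧
      (n + L) % 3 = 0 ∧ (m + (min m (o + L) - min m o)) % 3 = tv := by
  set s := (tv + 2 * m) % 3 with hs
  by_cases hA : n % 3 = 0
  · by_cases hB : n = 3
    · exact ⟨1, 0, by omega, by omega, by omega, by omega, by omega⟩
    · by_cases hC : m ≤ n - 2
      · by_cases hD : 4 ≤ m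
        · exact ⟨m - 3 + (2 * s) % 3, 3, by omega, by omega, by omega, by omega, by omega⟩
        · exact ⟨m - s, 3, by omega, by omega, by omega, by omega, by omega⟩
      · by_cases hE : s = 0
        · exact ⟨m - 3, 3, by omega, by omega, by omega, by omega, by omega⟩
        · exact ⟨m - 2, 3, by omega, by omega, by omega, by omega, by omega⟩
  · by_cases hA1 : n % 3 = 1
    · by_cases hC : m ≤ n - 2
      · by_cases hD : 3 ≤ m
        · exact ⟨m - 2 + (2 + 2 * s) % 3, 2, by omega, by omega, by omega, by omega, by omega⟩
        · exact ⟨2 - s, 2, by omega, by omega, by omega, by omega, by omega⟩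
      · by_cases hE : s = 2
        · exact ⟨m - 2, 2, by omega, by omega, by omega, by omega, by omega⟩
        · exact ⟨m - 1, 2, by omega, by omega, by omega, by omega, by omega⟩
    · by_cases hC : m ≤ n - 2
      · by_cases hD : 5 ≤ m
        · exact ⟨m - 4 + (1 + 2 * s) % 3, 4, by omega, by omega, by omega, by omega, by omega⟩
        · exact ⟨m - s, 4, by omega, by omega, by omega, by omega, by omega⟩
      · by_cases hE : s = 1
        · exact ⟨m - 4, 4, by omega, by omega, by omega, by omega, by omega⟩
        · exact ⟨m - 3, 4, by omega, by omega, by omega, by omega, by omega⟩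

private lemma lemA (n : ℕ) (hn : 3 ≤ n) (hn5 : n ≠ 5) (m : ℕ) (hm2 : 2 ≤ m) (hmn : m < n)
    (t : ZMod 3) (h2 : m = 2 → t ≠ 1) (h3 : m = n - 1 → t ≠ 0) :
    ∃ V : ZMod n → ZMod 3, V 0 = 0 ∧ V 1 = 1 ∧ V (m : ZMod n) = t ∧
      (∀ j, V j ≠ V (j + 1)) ∧ (∀ j, ¬(V j = V (j + 2) ∧ V (j + 1) = V (j + 3))) := by
  haveI : NeZero n := ⟨by omega⟩
  haveI : Fact (1 < n) := ⟨by omega⟩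
  have hcast : ((t.val : ℕ) : ZMod 3) = t := ZMod.natCast_rightInverse t
  have h2' : m ≠ 2 ∨ t.val ≠ 1 := by
    by_cases hm : m = 2
    · right; intro hv; exact h2 hm (by rw [← hcast, hv]; norm_num)
    · left; exact hm
  have h3' : m ≠ n - 1 ∨ t.val ≠ 0 := by
    by_cases hm : m = n - 1
    · right; intro hv; exact h3 hm (by rw [← hcast, hv]; norm_num)
    · left; exact hm
  obtain ⟨o, L, ho, hoL, hLalt, hsum, hval⟩ :=
    exists_oL n m t.val hn hn5 hm2 hmn (ZMod.val_lt t) h2' h3'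
  have key : ∀ (j : ZMod n) (d : ℕ), uF n o L ((j + (d : ZMod n)).val) = uF n o L (j.val + d) := by
    intro j d
    apply uF_congr
    rw [ZMod.val_add, ZMod.val_natCast]
    have h1 : (j.val + d % n) % n % n = (j.val + d % n) % n := Nat.mod_mod_of_dvd _ dvd_rfl
    rw [h1]
    conv_rhs => rw [Nat.add_mod]
    conv_lhs => rw [Nat.add_mod, Nat.mod_mod_of_dvd d dvd_rfl]
  refine ⟨fun j => uF n o L j.val, ?_, ?_, ?_, ?_, ?_⟩
  · show uF n o L (0 : ZMod n).val = 0
    simp [uF, cntF, ZMod.val_zero]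
  · show uF n o L (1 : ZMod n).val = 1
    rw [ZMod.val_one]
    unfold uF cntF
    rw [Nat.mod_eq_of_lt (by omega)]
    rw [show min 1 (o + L) - min 1 o = 0 by omega]
    norm_num
  · show uF n o L ((m : ZMod n)).val = t
    rw [ZMod.val_natCast]
    rw [uF_congr n o L (m % n) m (by rw [Nat.mod_mod_of_dvd _ dvd_rfl])]
    unfold uF cntF
    rw [Nat.mod_eq_of_lt hmn, ← hcast]
    have htv : t.val < 3 := ZMod.val_lt t
    apply (ZMod.natCast_eq_natCast_iff _ _ _).mpr
    show (m + (min m (o + L) - min m o)) % 3 = t.val % 3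
    omega
  · intro j h
    replace h : uF n o L j.val = uF n o L (j + 1).val := h
    rw [show (1 : ZMod n) = ((1 : ℕ) : ZMod n) by norm_num, key j 1,
      vstep n o L hn ho hoL hLalt hsum j.val] at h
    exact stF_ne_zero n o L j.val (left_eq_add.mp h)
  · intro j hC
    obtain ⟨hA, hB⟩ := hC
    replace hA : uF n o L j.val = uF n o L (j + 2).val := hA
    replace hB : uF n o L (j + 1).val = uF n o L (j + 3).val := hB
    rw [show (2 : ZMod n) = ((2 : ℕ) : ZMod n) by norm_num, key j 2] at hA
    rw [show (3 : ZMod n) = ((3 : ℕ) : ZMod n) by norm_num, key j 3,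
      show (1 : ZMod n) = ((1 : ℕ) : ZMod n) by norm_num, key j 1] at hB
    have s1 := vstep n o L hn ho hoL hLalt hsum
    have sA : uF n o L (j.val + 1) = uF n o L j.val + stF n o L j.val := s1 j.val
    have sB : uF n o L (j.val + 2) = uF n o L (j.val + 1) + stF n o L (j.val + 1) := s1 (j.val + 1)
    have sC : uF n o L (j.val + 3) = uF n o L (j.val + 2) + stF n o L (j.val + 2) := s1 (j.val + 2)
    rw [sB, sA, add_assoc] at hA
    have c1 : stF n o L j.val + stF n o L (j.val + 1) = 0 := left_eq_add.mp hA
    rw [sC, sB, add_assoc] at hB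
    have c2 : stF n o L (j.val + 1) + stF n o L (j.val + 2) = 0 := left_eq_add.mp hB
    rcases noalt n o L hn ho hoL hLalt j.val with h | h
    · exact stF_sum_ne n o L _ _ h c1
    · exact stF_sum_ne n o L _ _ h c2

private lemma third_color {α : Type*} (a b c X Y : α) (hab : a ≠ b) (hac : a ≠ c) (hbc : b ≠ c)
    (hX : X = a ∨ X = b ∨ X = c) (hY : Y = a ∨ Y = b ∨ Y = c) (hXY : X ≠ Y) :
    ∃ W, (W = a ∨ W = b ∨ W = c) ∧ X ≠ W ∧ Y ≠ W ∧
      ∀ u, (u = a ∨ u = b ∨ u = c) → u = X ∨ u = Y ∨ u = W := by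
  rcases hX with rfl | rfl | rfl <;> rcases hY with rfl | rfl | rfl
  · exact absurd rfl hXY
  · exact ⟨c, Or.inr (Or.inr rfl), hac, hbc, by tauto⟩
  · exact ⟨b, Or.inr (Or.inl rfl), hab, Ne.symm hbc, by tauto⟩
  · exact ⟨c, Or.inr (Or.inr rfl), hbc, hac, by tauto⟩
  · exact absurd rfl hXY
  · exact ⟨a, Or.inl rfl, Ne.symm hab, Ne.symm hac, by tauto⟩
  · exact ⟨b, Or.inr (Or.inl rfl), Ne.symm hbc, hab, by tauto⟩
  · exact ⟨a, Or.inl rfl, Ne.symm hac, Ne.symm hab, by tauto⟩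
  · exact absurd rfl hXY

theorem stmt_5 {α : Type*} (n : ℕ) (hn : 3 ≤ n) (hn5 : n ≠ 5)
    (a b c : α) (hab : a ≠ b) (hac : a ≠ c) (hbc : b ≠ c)
    (S : Finset (ZMod n)) (hScard : S.card = 3) (f : ZMod n → α)
    (hcolors : ∀ i ∈ S, f i ∈ ({a, b, c} : Set α))
    (hproper : ∀ i ∈ S, i + 1 ∈ S → f i ≠ f (i + 1))
    (hadj : ∃ i ∈ S, i + 1 ∈ S) :
    ∃ g : ZMod n → α, (∀ i, g i ∈ ({a, b, c} : Set α)) ∧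
      IsStarEdgeColoringCycle n g ∧ ∀ i ∈ S, g i = f i := by
  classical
  haveI : NeZero n := ⟨by omega⟩
  haveI : Fact (1 < n) := ⟨by omega⟩
  obtain ⟨p, hpS, hp1S⟩ := hadj
  have hp1 : p ≠ p + 1 := by
    intro h
    exact one_ne_zero (left_eq_add.mp h)
  have hsub : ({p, p + 1} : Finset (ZMod n)) ⊆ S := by
    intro x hx
    simp only [Finset.mem_insert, Finset.mem_singleton] at hx
    rcases hx with rfl | rfl <;> assumption
  have hcard2 : ({p, p + 1} : Finset (ZMod n)).card = 2 := by
    rw [Finset.card_insert_of_notMem (by simp [hp1]), Finset.card_singleton]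
  have hne : (S \ {p, p + 1}).Nonempty := by
    rw [← Finset.card_pos, Finset.card_sdiff_of_subset hsub, hScard, hcard2]
    norm_num
  obtain ⟨q, hq⟩ := hne
  rw [Finset.mem_sdiff] at hq
  obtain ⟨hqS, hqn⟩ := hq
  simp only [Finset.mem_insert, Finset.mem_singleton, not_or] at hqn
  obtain ⟨hqp, hqp1⟩ := hqn
  set m := (q - p).val with hm
  have hqpm : ((m : ℕ) : ZMod n) = q - p := by rw [hm, ZMod.natCast_val, ZMod.cast_id]
  have hmlt : m < n := ZMod.val_lt _
  have hm0 : m ≠ 0 := by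
    intro h
    apply hqp
    have h1 : q - p = 0 := by rw [← hqpm, h]; norm_num
    exact sub_eq_zero.mp h1
  have hm1 : m ≠ 1 := by
    intro h
    apply hqp1
    have h1 : q - p = 1 := by rw [← hqpm, h]; norm_num
    have h2 := sub_eq_iff_eq_add.mp h1
    rw [h2, add_comm]
  have hXmem : f p = a ∨ f p = b ∨ f p = c := by
    have := hcolors p hpS; simpa using this
  have hYmem : f (p + 1) = a ∨ f (p + 1) = b ∨ f (p + 1) = c := by
    have := hcolors (p + 1) hp1S; simpa using this
  have hZmem : f q = a ∨ f q = b ∨ f q = c := by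
    have := hcolors q hqS; simpa using this
  have hXY : f p ≠ f (p + 1) := hproper p hpS hp1S
  obtain ⟨W, hWmem, hXW, hYW, hcov⟩ :=
    third_color a b c (f p) (f (p + 1)) hab hac hbc hXmem hYmem hXY
  set t : ZMod 3 := if f q = f p then 0 else if f q = f (p + 1) then 1 else 2 with ht
  have ht2 : m = 2 → t ≠ 1 := by
    intro hm2
    have hq2 : q = p + 2 := by
      have h1 : q - p = ((2 : ℕ) : ZMod n) := by rw [← hqpm, hm2]
      have h2 := sub_eq_iff_eq_add.mp h1
      rw [h2, add_comm]
      norm_num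
    have hp11 : p + 1 + 1 = q := by rw [hq2]; ring
    have hYZ : f (p + 1) ≠ f q := by
      have h1 := hproper (p + 1) hp1S (by rw [hp11]; exact hqS)
      rw [hp11] at h1
      exact h1
    intro h1
    rw [ht] at h1
    split_ifs at h1 with g1 g2
    · exact absurd h1 (by decide)
    · exact hYZ g2.symm
    · exact absurd h1 (by decide)
  have ht3 : m = n - 1 → t ≠ 0 := by
    intro hmn1
    have hq3 : q + 1 = p := by
      have h1 : q - p = ((n - 1 : ℕ) : ZMod n) := by rw [← hqpm, hmn1]
      have h2 : ((n - 1 : ℕ) : ZMod n) = -1 := by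
        rw [Nat.cast_sub (by omega), ZMod.natCast_self, Nat.cast_one, zero_sub]
      rw [h2] at h1
      have h3 : q = -1 + p := sub_eq_iff_eq_add.mp h1
      rw [h3]; ring
    have hZX : f q ≠ f p := by
      have h1 := hproper q hqS (by rw [hq3]; exact hpS)
      rw [hq3] at h1
      exact h1
    intro h0
    rw [ht] at h0
    split_ifs at h0 with g1 g2
    · exact hZX g1
    · exact absurd h0 (by decide)
    · exact absurd h0 (by decide)
  obtain ⟨V, hV0, hV1, hVm, hVp, hVs⟩ := lemA n hn hn5 m (by omega) hmlt t ht2 ht3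
  set ρ : ZMod 3 → α := fun z => if z = 0 then f p else if z = 1 then f (p + 1) else W with hρ
  have hρ0 : ρ 0 = f p := if_pos rfl
  have hρ1 : ρ 1 = f (p + 1) := by
    rw [show ρ 1 = if (1 : ZMod 3) = 0 then f p else if (1 : ZMod 3) = 1 then f (p + 1) else W
      from rfl, if_neg (by decide), if_pos rfl]
  have hρ2 : ρ 2 = W := by
    rw [show ρ 2 = if (2 : ZMod 3) = 0 then f p else if (2 : ZMod 3) = 1 then f (p + 1) else W
      from rfl, if_neg (by decide), if_neg (by decide)]
  have hzc : ∀ z : ZMod 3, z = 0 ∨ z = 1 ∨ z = 2 := by decide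
  have hρinj : ∀ z w : ZMod 3, ρ z = ρ w → z = w := by
    intro z w h
    rcases hzc z with rfl | rfl | rfl <;> rcases hzc w with rfl | rfl | rfl
    · rfl
    · rw [hρ0, hρ1] at h; exact absurd h hXY
    · rw [hρ0, hρ2] at h; exact absurd h hXW
    · rw [hρ1, hρ0] at h; exact absurd h.symm hXY
    · rfl
    · rw [hρ1, hρ2] at h; exact absurd h hYW
    · rw [hρ2, hρ0] at h; exact absurd h.symm hXW
    · rw [hρ2, hρ1] at h; exact absurd h.symm hYW
    · rfl
  refine ⟨fun i => ρ (V (i - p)), ?_, ⟨?_, ?_⟩, ?_⟩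
  · intro i
    show ρ (V (i - p)) ∈ ({a, b, c} : Set α)
    simp only [Set.mem_insert_iff, Set.mem_singleton_iff]
    rcases hzc (V (i - p)) with h | h | h <;> rw [h]
    · rw [hρ0]; exact hXmem
    · rw [hρ1]; exact hYmem
    · rw [hρ2]; exact hWmem
  · intro i h
    replace h : ρ (V (i - p)) = ρ (V (i + 1 - p)) := h
    rw [show i + 1 - p = (i - p) + 1 by ring] at h
    exact hVp (i - p) (hρinj _ _ h)
  · intro i h
    obtain ⟨h1, h2⟩ := h
    replace h1 : ρ (V (i - p)) = ρ (V (i + 2 - p)) := h1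
    replace h2 : ρ (V (i + 1 - p)) = ρ (V (i + 3 - p)) := h2
    rw [show i + 2 - p = (i - p) + 2 by ring] at h1
    rw [show i + 1 - p = (i - p) + 1 by ring, show i + 3 - p = (i - p) + 3 by ring] at h2
    exact hVs (i - p) ⟨hρinj _ _ h1, hρinj _ _ h2⟩
  · have hsub3 : ({p, p + 1, q} : Finset (ZMod n)) ⊆ S := by
      intro x hx
      simp only [Finset.mem_insert, Finset.mem_singleton] at hx
      rcases hx with rfl | rfl | rfl <;> assumption
    have hcard3 : ({p, p + 1, q} : Finset (ZMod n)).card = 3 := by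
      rw [Finset.card_insert_of_notMem (by simp [hp1, Ne.symm hqp]),
        Finset.card_insert_of_notMem (by simp [Ne.symm hqp1]), Finset.card_singleton]
    have hSeq : S = {p, p + 1, q} :=
      (Finset.eq_of_subset_of_card_le hsub3 (by rw [hScard, hcard3])).symm
    intro i hi
    rw [hSeq] at hi
    simp only [Finset.mem_insert, Finset.mem_singleton] at hi
    rcases hi with rfl | rfl | rfl
    · show ρ (V (i - i)) = f i
      rw [sub_self, hV0, hρ0]
    · show ρ (V (p + 1 - p)) = f (p + 1)
      rw [add_sub_cancel_left, hV1, hρ1]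
    · show ρ (V (i - p)) = f i
      rw [← hqpm, hVm, ht]
      split_ifs with g1 g2
      · rw [hρ0, g1]
      · rw [hρ1, g2]
      · rw [hρ2]
        rcases hcov (f i) hZmem with h | h | h
        · exact absurd h g1
        · exact absurd h g2
        · exact h.symm
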